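/- arXiv:1811.02431 — 2 statements merged into one kernel-verified Lean document; each statement's English description precedes it below -/
import Mathlib

section
/- Let (ξ_t, η_t, φ_t) be a formal deformation of φ: M → N whose n-infinitesimal (ξ_n, η_n, φ_n) is a coboundary, say (ξ_n, η_n, φ_n) = d(ψ, θ, 0), i.e., ξ_n = δψ, η_n = δθ, φ_n = φψ − θφ. Set Ψ_t = Id_M + ψ t^n, Θ_t = Id_N + θ t^n, and define ξ̃_t = Ψ_t∘ξ_t∘Ψ_t^{−1}, η̃_t = Θ_t∘η_t∘Θ_t^{−1}, φ̃_t = Θ_t∘φ_t∘Ψ_t^{−1}. Then (ξ̃_t, η̃_t, φ̃_t) is a formal deformation of φ equivalent to (ξ_t, η_t, φ_t) with (ξ̃_i, η̃_i, φ̃_i) = 0 for 1 ≤ i ≤ n. -/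
open Finset PowerSeries

variable {k A M N : Type*} [CommRing k] [Ring A] [Algebra k A]
  [AddCommGroup M] [Module k M] [AddCommGroup N] [Module k N]

/-- `(ξ_t = Σ ξᵢ tⁱ, η_t = Σ ηᵢ tⁱ, φ_t = Σ φᵢ tⁱ)` is a formal one-parameter deformation
of the `A`-module homomorphism `φ : M → N`, where the module structures on `M` and `N` are
given by the algebra homomorphisms `ξ₀ : A → End_k(M)` and `η₀ : A → End_k(N)`.
The conditions `ξ_t(rs) = ξ_t(r)ξ_t(s)`, `η_t(rs) = η_t(r)η_t(s)` and
`φ_t(ξ_t(r)m) = η_t(r)φ_t(m)` are written out coefficientwise. -/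
def IsFormalDeformation (ξ0 : A →ₐ[k] Module.End k M) (η0 : A →ₐ[k] Module.End k N)
    (φ : M →ₗ[k] N) (ξ : ℕ → (A →ₗ[k] Module.End k M)) (η : ℕ → (A →ₗ[k] Module.End k N))
    (Φ : ℕ → (M →ₗ[k] N)) : Prop :=
  ξ 0 = ξ0.toLinearMap ∧ η 0 = η0.toLinearMap ∧ Φ 0 = φ ∧
  (∀ (l : ℕ) (r s : A), ξ l (r * s) = ∑ ij ∈ antidiagonal l, ξ ij.1 r * ξ ij.2 s) ∧
  (∀ (l : ℕ) (r s : A), η l (r * s) = ∑ ij ∈ antidiagonal l, η ij.1 r * η ij.2 s) ∧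
  (∀ (l : ℕ) (r : A), ∑ ij ∈ antidiagonal l, Φ ij.1 ∘ₗ (ξ ij.2 r : M →ₗ[k] M) =
    ∑ ij ∈ antidiagonal l, (η ij.1 r : N →ₗ[k] N) ∘ₗ Φ ij.2)

/-- A deformation of order `n` of the module homomorphism `φ : M → N`: the deformation
equations hold modulo `t^{n+1}`, i.e. for all `l ≤ n`. -/
def IsDeformationOfOrder (ξ0 : A →ₐ[k] Module.End k M) (η0 : A →ₐ[k] Module.End k N)
    (φ : M →ₗ[k] N) (ξ : ℕ → (A →ₗ[k] Module.End k M)) (η : ℕ → (A →ₗ[k] Module.End k N))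
    (Φ : ℕ → (M →ₗ[k] N)) (n : ℕ) : Prop :=
  ξ 0 = ξ0.toLinearMap ∧ η 0 = η0.toLinearMap ∧ Φ 0 = φ ∧
  (∀ l ≤ n, ∀ r s : A, ξ l (r * s) = ∑ ij ∈ antidiagonal l, ξ ij.1 r * ξ ij.2 s) ∧
  (∀ l ≤ n, ∀ r s : A, η l (r * s) = ∑ ij ∈ antidiagonal l, η ij.1 r * η ij.2 s) ∧
  (∀ l ≤ n, ∀ r : A, ∑ ij ∈ antidiagonal l, Φ ij.1 ∘ₗ (ξ ij.2 r : M →ₗ[k] M) =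
    ∑ ij ∈ antidiagonal l, (η ij.1 r : N →ₗ[k] N) ∘ₗ Φ ij.2)

/-- `(u, v, w)` is a 1-cocycle in the deformation complex `C^*(φ)`:
`δu = 0` in `C²(A;End M)`, `δv = 0` in `C²(A;End N)` and `φu - vφ - δw = 0`
in `C¹(A;Hom_k(M,N))`. -/
def IsOneCocycle (ξ0 : A →ₐ[k] Module.End k M) (η0 : A →ₐ[k] Module.End k N)
    (φ : M →ₗ[k] N) (u : A →ₗ[k] Module.End k M) (v : A →ₗ[k] Module.End k N)
    (w : M →ₗ[k] N) : Prop :=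
  (∀ a b : A, ξ0 a * u b - u (a * b) + u a * ξ0 b = 0) ∧
  (∀ a b : A, η0 a * v b - v (a * b) + v a * η0 b = 0) ∧
  (∀ a : A, φ ∘ₗ (u a : M →ₗ[k] M) - (v a : N →ₗ[k] N) ∘ₗ φ -
    ((η0 a : N →ₗ[k] N) ∘ₗ w - w ∘ₗ (ξ0 a : M →ₗ[k] M)) = 0)

/-- `(Ψ_t = Σ ψᵢ tⁱ, Θ_t = Σ θᵢ tⁱ)` is a formal isomorphism from the deformation
`(ξ_t, η_t, φ_t)` to the deformation `(ξ'_t, η'_t, φ'_t)` of the module homomorphism `φ`: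
`ψ₀ = id`, `θ₀ = id`, `ξ'_t(r) Ψ_t = Ψ_t ξ_t(r)`, `η'_t(r) Θ_t = Θ_t η_t(r)` and
`φ'_t ∘ Ψ_t = Θ_t ∘ φ_t`, written out coefficientwise (Cauchy products). -/
def IsFormalIso (ξ : ℕ → (A →ₗ[k] Module.End k M)) (η : ℕ → (A →ₗ[k] Module.End k N))
    (Φ : ℕ → (M →ₗ[k] N)) (ξ' : ℕ → (A →ₗ[k] Module.End k M))
    (η' : ℕ → (A →ₗ[k] Module.End k N)) (Φ' : ℕ → (M →ₗ[k] N))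
    (ψ : ℕ → Module.End k M) (θ : ℕ → Module.End k N) : Prop :=
  ψ 0 = 1 ∧ θ 0 = 1 ∧
  (∀ (l : ℕ) (r : A), ∑ ij ∈ antidiagonal l, ξ' ij.1 r * ψ ij.2 =
    ∑ ij ∈ antidiagonal l, ψ ij.1 * ξ ij.2 r) ∧
  (∀ (l : ℕ) (r : A), ∑ ij ∈ antidiagonal l, η' ij.1 r * θ ij.2 =
    ∑ ij ∈ antidiagonal l, θ ij.1 * η ij.2 r) ∧
  (∀ l : ℕ, ∑ ij ∈ antidiagonal l, Φ' ij.1 ∘ₗ (ψ ij.2 : M →ₗ[k] M) =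
    ∑ ij ∈ antidiagonal l, (θ ij.1 : N →ₗ[k] N) ∘ₗ Φ ij.2)

/-- The trivial (constant) deformation coefficients attached to a structure map. -/
def trivialCoeffs {F : Type*} [Zero F] (f : F) : ℕ → F := fun i => if i = 0 then f else 0



section PSHelpers
variable {R : Type*} [Ring R]

lemma sum_antidiag_ite_fst {l m : ℕ} (g : ℕ → R) :
    ∑ ij ∈ antidiagonal l, (if ij.1 = m then g ij.2 else 0)
      = if m ≤ l then g (l - m) else 0 := by
  by_cases h : m ≤ l
  · rw [if_pos h, Finset.sum_eq_single_of_mem (m, l - m)]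
    · simp
    · rw [Finset.HasAntidiagonal.mem_antidiagonal]; omega
    · rintro ⟨i, j⟩ hij hne
      rw [Finset.HasAntidiagonal.mem_antidiagonal] at hij
      rcases eq_or_ne i m with rfl | hi
      · exact absurd (by simp only [Prod.mk.injEq, true_and]; omega) hne
      · simp [hi]
  · rw [if_neg h]
    apply Finset.sum_eq_zero
    rintro ⟨i, j⟩ hij
    rw [Finset.HasAntidiagonal.mem_antidiagonal] at hij
    rw [if_neg (by omega)]

lemma sum_antidiag_ite_snd {l m : ℕ} (g : ℕ → R) :
    ∑ ij ∈ antidiagonal l, (if ij.2 = m then g ij.1 else 0)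
      = if m ≤ l then g (l - m) else 0 := by
  by_cases h : m ≤ l
  · rw [if_pos h, Finset.sum_eq_single_of_mem (l - m, m)]
    · simp
    · rw [Finset.HasAntidiagonal.mem_antidiagonal]; omega
    · rintro ⟨i, j⟩ hij hne
      rw [Finset.HasAntidiagonal.mem_antidiagonal] at hij
      rcases eq_or_ne j m with rfl | hj
      · exact absurd (by simp only [Prod.mk.injEq, and_true]; omega) hne
      · simp [hj]
  · rw [if_neg h]
    apply Finset.sum_eq_zero
    rintro ⟨i, j⟩ hij
    rw [Finset.HasAntidiagonal.mem_antidiagonal] at hij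
    rw [if_neg (by omega)]

lemma coeff_monomial_mul' (a : R) (f : PowerSeries R) (m l : ℕ) :
    coeff l (monomial m a * f) = if m ≤ l then a * coeff (l - m) f else 0 := by
  rw [coeff_mul, ← sum_antidiag_ite_fst (fun j => a * coeff j f)]
  apply Finset.sum_congr rfl
  rintro ⟨i, j⟩ _
  rw [coeff_monomial]
  split <;> simp

lemma coeff_mul_monomial' (a : R) (f : PowerSeries R) (m l : ℕ) :
    coeff l (f * monomial m a) = if m ≤ l then coeff (l - m) f * a else 0 := by
  rw [coeff_mul, ← sum_antidiag_ite_snd (fun j => coeff j f * a)]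
  apply Finset.sum_congr rfl
  rintro ⟨i, j⟩ _
  rw [coeff_monomial]
  split <;> simp

/-- The inverse of `1 + a tⁿ`. -/
noncomputable def geomV (a : R) (n : ℕ) : PowerSeries R :=
  PowerSeries.mk fun i => if n ∣ i then (-a) ^ (i / n) else 0

lemma coeff_geomV (a : R) (n i : ℕ) :
    coeff i (geomV a n) = if n ∣ i then (-a) ^ (i / n) else 0 := coeff_mk _ _

lemma one_add_monomial_mul_geomV (a : R) {n : ℕ} (hn : 0 < n) :
    (1 + monomial n a) * geomV a n = 1 := by
  ext l
  rw [add_mul, one_mul, map_add, coeff_monomial_mul', coeff_geomV, coeff_one]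
  by_cases hd : n ∣ l
  · obtain ⟨c, rfl⟩ := hd
    rw [if_pos ⟨c, rfl⟩, Nat.mul_div_cancel_left _ hn]
    cases c with
    | zero =>
      have h0 : ¬ n ≤ n * 0 := by omega
      simp [h0, hn.ne']
    | succ c =>
      have hle : n ≤ n * (c + 1) := Nat.le_mul_of_pos_right n (Nat.succ_pos c)
      have hne0 : n * (c + 1) ≠ 0 := by positivity
      rw [if_neg hne0, if_pos hle]
      have h2 : n * (c + 1) - n = n * c := by rw [Nat.mul_succ]; omega
      rw [h2, coeff_geomV, if_pos ⟨c, rfl⟩, Nat.mul_div_cancel_left _ hn, pow_succ',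
        neg_mul, neg_add_cancel]
  · have hl0 : l ≠ 0 := by rintro rfl; exact hd ⟨0, rfl⟩
    rw [if_neg hd, if_neg hl0, zero_add]
    by_cases h : n ≤ l
    · have hnd : ¬ n ∣ (l - n) := fun hdd => hd (by
        have := Nat.dvd_add hdd (dvd_refl n)
        rwa [Nat.sub_add_cancel h] at this)
      rw [if_pos h, coeff_geomV, if_neg hnd, mul_zero]
    · rw [if_neg h]

lemma geomV_mul_one_add_monomial (a : R) {n : ℕ} (hn : 0 < n) :
    geomV a n * (1 + monomial n a) = 1 := by
  ext l
  rw [mul_add, mul_one, map_add, coeff_mul_monomial', coeff_geomV, coeff_one]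
  by_cases hd : n ∣ l
  · obtain ⟨c, rfl⟩ := hd
    rw [if_pos ⟨c, rfl⟩, Nat.mul_div_cancel_left _ hn]
    cases c with
    | zero =>
      have h0 : ¬ n ≤ n * 0 := by omega
      simp [h0, hn.ne']
    | succ c =>
      have hle : n ≤ n * (c + 1) := Nat.le_mul_of_pos_right n (Nat.succ_pos c)
      have hne0 : n * (c + 1) ≠ 0 := by positivity
      rw [if_neg hne0, if_pos hle]
      have h2 : n * (c + 1) - n = n * c := by rw [Nat.mul_succ]; omega
      rw [h2, coeff_geomV, if_pos ⟨c, rfl⟩, Nat.mul_div_cancel_left _ hn, pow_succ,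
        mul_neg, neg_add_cancel]
  · have hl0 : l ≠ 0 := by rintro rfl; exact hd ⟨0, rfl⟩
    rw [if_neg hd, if_neg hl0, zero_add]
    by_cases h : n ≤ l
    · have hnd : ¬ n ∣ (l - n) := fun hdd => hd (by
        have := Nat.dvd_add hdd (dvd_refl n)
        rwa [Nat.sub_add_cancel h] at this)
      rw [if_pos h, coeff_geomV, if_neg hnd, zero_mul]
    · rw [if_neg h]

lemma conj_mul_conj {U₁ V₁ U₂ V₂ : PowerSeries R} (h : V₁ * U₂ = 1) (X Y : PowerSeries R) :
    (U₁ * X * V₁) * (U₂ * Y * V₂) = U₁ * (X * Y) * V₂ := by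
  simp only [mul_assoc]
  rw [← mul_assoc V₁ U₂, h, one_mul]

lemma coeff_one_add_monomial {a : R} {n : ℕ} (hn : 0 < n) (i : ℕ) :
    coeff i (1 + monomial n a) = if i = 0 then 1 else if i = n then a else 0 := by
  rw [map_add, coeff_one, coeff_monomial]
  rcases eq_or_ne i 0 with rfl | h0
  · rw [if_pos rfl, if_pos rfl, if_neg (by omega), add_zero]
  · rw [if_neg h0, if_neg h0, zero_add]

lemma coeff_geomV_of_le {a : R} {n i : ℕ} (hn : 0 < n) (hi : i ≤ n) :
    coeff i (geomV a n) = if i = 0 then 1 else if i = n then -a else 0 := by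
  rw [coeff_geomV]
  rcases eq_or_ne i 0 with rfl | h0
  · simp
  · rcases eq_or_ne i n with rfl | hnn
    · rw [if_pos dvd_rfl, Nat.div_self hn, pow_one, if_neg h0, if_pos rfl]
    · have hnd : ¬ n ∣ i := fun hdd =>
        absurd (Nat.le_of_dvd (Nat.pos_of_ne_zero h0) hdd) (not_le.mpr (lt_of_le_of_ne hi hnn))
      rw [if_neg hnd, if_neg h0, if_neg hnn]
end PSHelpers

section PSHelpers2
variable {R : Type*} [Ring R]

lemma coeff_one_add_monomial_mul {a : R} {n : ℕ} (hn : 0 < n) (G : PowerSeries R)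
    {l : ℕ} (hl : l ≤ n) :
    coeff l ((1 + monomial n a) * G)
      = coeff l G + if l = n then a * coeff 0 G else 0 := by
  rw [add_mul, one_mul, map_add, coeff_monomial_mul']
  congr 1
  rcases eq_or_ne l n with rfl | h
  · rw [if_pos rfl, if_pos le_rfl, Nat.sub_self]
  · rw [if_neg h, if_neg (by omega)]

lemma coeff_mul_geomV {a : R} {n : ℕ} (hn : 0 < n) (G : PowerSeries R)
    {l : ℕ} (hl : l ≤ n) :
    coeff l (G * geomV a n)
      = coeff l G + if l = n then coeff 0 G * (-a) else 0 := by
  rw [coeff_mul]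
  have : ∀ ij ∈ antidiagonal l,
      coeff ij.1 G * coeff ij.2 (geomV a n)
        = (if ij.2 = 0 then coeff ij.1 G else 0)
          + (if ij.2 = n then coeff ij.1 G * (-a) else 0) := by
    rintro ⟨i, j⟩ hij
    rw [Finset.HasAntidiagonal.mem_antidiagonal] at hij
    have hj : j ≤ n := by omega
    rw [coeff_geomV_of_le hn hj]
    rcases eq_or_ne j 0 with rfl | h0
    · rw [if_pos rfl, if_pos rfl, if_neg (by omega : ¬ ((i,(0:ℕ)).2 = n)), mul_one, add_zero]
    · rw [if_neg h0, if_neg h0, zero_add]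
      rcases eq_or_ne j n with rfl | hjn
      · rw [if_pos rfl, if_pos rfl]
      · rw [if_neg hjn, if_neg hjn, mul_zero]
  rw [Finset.sum_congr rfl this, Finset.sum_add_distrib,
    sum_antidiag_ite_snd (fun i => coeff i G),
    sum_antidiag_ite_snd (fun i => coeff i G * (-a))]
  congr 1
  · rcases eq_or_ne l n with rfl | h
    · rw [if_pos le_rfl, if_pos rfl, Nat.sub_self]
    · rw [if_neg (by omega), if_neg h]

lemma coeff_conj_of_le {a b : R} {n : ℕ} (hn : 0 < n) (G : PowerSeries R)
    {l : ℕ} (hl : l ≤ n) :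
    coeff l ((1 + monomial n b) * G * geomV a n)
      = coeff l G
        + if l = n then b * coeff 0 G - coeff 0 G * a else 0 := by
  rw [mul_assoc, coeff_one_add_monomial_mul hn _ hl, coeff_mul_geomV hn G hl,
    coeff_mul_geomV hn G (Nat.zero_le n)]
  rw [if_neg (by omega : ¬ (0 : ℕ) = n), add_zero]
  rcases eq_or_ne l n with rfl | h
  · rw [if_pos rfl, if_pos rfl, if_pos rfl, add_assoc, add_comm (coeff 0 G * (-a)),
      mul_neg, ← sub_eq_add_neg]
  · rw [if_neg h, if_neg h, if_neg h, add_zero, add_zero]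

lemma coeff_conj_mem {k : Type*} [CommRing k] [Algebra k R] (S : Submodule k R)
    {b a : R} {n : ℕ} (hn : 0 < n)
    (hb : ∀ x ∈ S, b * x ∈ S) (ha : ∀ x ∈ S, x * a ∈ S)
    (G : PowerSeries R) (hG : ∀ i, coeff i G ∈ S) (l : ℕ) :
    coeff l ((1 + monomial n b) * G * geomV a n) ∈ S := by
  have hpow : ∀ (e : ℕ) (x : R), x ∈ S → x * (-a) ^ e ∈ S := by
    intro e
    induction e with
    | zero => intro x hx; simpa using hx
    | succ e ih =>
      intro x hx
      rw [pow_succ, ← mul_assoc, mul_neg]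
      exact S.neg_mem (ha _ (ih x hx))
  rw [mul_assoc, coeff_mul]
  refine Submodule.sum_mem _ ?_
  rintro ⟨i, j⟩ -
  have hinner : coeff j (G * geomV a n) ∈ S := by
    rw [coeff_mul]
    refine Submodule.sum_mem _ ?_
    rintro ⟨p, q⟩ -
    rw [coeff_geomV]
    by_cases hq : n ∣ q
    · rw [if_pos hq]; exact hpow _ _ (hG p)
    · rw [if_neg hq, mul_zero]; exact S.zero_mem
  rw [coeff_one_add_monomial hn]
  rcases eq_or_ne i 0 with rfl | h0
  · rw [if_pos rfl, one_mul]; exact hinner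
  · rw [if_neg h0]
    rcases eq_or_ne i n with rfl | hn'
    · rw [if_pos rfl]; exact hb _ hinner
    · rw [if_neg hn', zero_mul]; exact S.zero_mem

end PSHelpers2

section Blocks
variable {k M N : Type*} [CommRing k]
  [AddCommGroup M] [Module k M] [AddCommGroup N] [Module k N]

/-- Embed `End M` into `End (M × N)` as the upper-left block. -/
def eMblk : Module.End k M →ₗ[k] Module.End k (M × N) where
  toFun f := LinearMap.inl k M N ∘ₗ f ∘ₗ LinearMap.fst k M N
  map_add' f g := by ext x <;> simp
  map_smul' c f := by ext x <;> simp

/-- Embed `End N` into `End (M × N)` as the lower-right block. -/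
def eNblk : Module.End k N →ₗ[k] Module.End k (M × N) where
  toFun g := LinearMap.inr k M N ∘ₗ g ∘ₗ LinearMap.snd k M N
  map_add' f g := by ext x <;> simp
  map_smul' c f := by ext x <;> simp

/-- Embed `Hom(M, N)` into `End (M × N)` as the lower-left block. -/
def eHblk : (M →ₗ[k] N) →ₗ[k] Module.End k (M × N) where
  toFun h := LinearMap.inr k M N ∘ₗ h ∘ₗ LinearMap.fst k M N
  map_add' f g := by ext x <;> simp
  map_smul' c f := by ext x <;> simp

/-- Upper-left block retraction. -/
def rMblk : Module.End k (M × N) →ₗ[k] Module.End k M where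
  toFun z := LinearMap.fst k M N ∘ₗ z ∘ₗ LinearMap.inl k M N
  map_add' f g := by ext x <;> simp
  map_smul' c f := by ext x <;> simp

/-- Lower-right block retraction. -/
def rNblk : Module.End k (M × N) →ₗ[k] Module.End k N where
  toFun z := LinearMap.snd k M N ∘ₗ z ∘ₗ LinearMap.inr k M N
  map_add' f g := by ext x <;> simp
  map_smul' c f := by ext x <;> simp

/-- Lower-left block retraction. -/
def rHblk : Module.End k (M × N) →ₗ[k] (M →ₗ[k] N) where
  toFun z := LinearMap.snd k M N ∘ₗ z ∘ₗ LinearMap.inl k M N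
  map_add' f g := by ext x <;> simp
  map_smul' c f := by ext x <;> simp

@[simp] lemma eMblk_apply (f : Module.End k M) (x : M × N) :
    (eMblk f : Module.End k (M × N)) x = (f x.1, 0) := rfl
@[simp] lemma eNblk_apply (g : Module.End k N) (x : M × N) :
    (eNblk g : Module.End k (M × N)) x = (0, g x.2) := rfl
@[simp] lemma eHblk_apply (h : M →ₗ[k] N) (x : M × N) :
    (eHblk h : Module.End k (M × N)) x = (0, h x.1) := rfl

lemma rMblk_eMblk (f : Module.End k M) : rMblk (eMblk (k := k) (N := N) f) = f := by ext x; simp [rMblk]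
lemma rNblk_eNblk (g : Module.End k N) : rNblk (eNblk (k := k) (M := M) g) = g := by ext x; simp [rNblk]
lemma rHblk_eHblk (h : M →ₗ[k] N) : rHblk (eHblk h) = h := by ext x; simp [rHblk]

lemma eMblk_inj {f g : Module.End k M} (h : eMblk (k := k) (N := N) f = eMblk g) : f = g := by
  rw [← rMblk_eMblk (N := N) f, h, rMblk_eMblk]
lemma eNblk_inj {f g : Module.End k N} (h : eNblk (k := k) (M := M) f = eNblk g) : f = g := by
  rw [← rNblk_eNblk (M := M) g, ← h, rNblk_eNblk]
lemma eHblk_inj {f g : M →ₗ[k] N} (h : eHblk (k := k) f = eHblk g) : f = g := by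
  rw [← rHblk_eHblk f, h, rHblk_eHblk]

lemma eMblk_mul (f g : Module.End k M) : eMblk (k := k) (N := N) f * eMblk g = eMblk (f * g) := by
  apply LinearMap.ext; intro x; simp [Module.End.mul_apply]
lemma eNblk_mul (f g : Module.End k N) : eNblk (k := k) (M := M) f * eNblk g = eNblk (f * g) := by
  apply LinearMap.ext; intro x; simp [Module.End.mul_apply]
lemma eHblk_mul_eMblk (h : M →ₗ[k] N) (f : Module.End k M) :
    eHblk (k := k) h * eMblk f = eHblk (h ∘ₗ f) := by
  apply LinearMap.ext; intro x; simp [Module.End.mul_apply]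
lemma eNblk_mul_eHblk (g : Module.End k N) (h : M →ₗ[k] N) :
    eNblk (k := k) g * eHblk h = eHblk ((g : N →ₗ[k] N) ∘ₗ h) := by
  apply LinearMap.ext; intro x; simp [Module.End.mul_apply]

end Blocks

section Series
variable {k A M N : Type*} [CommRing k] [Ring A] [Algebra k A]
  [AddCommGroup M] [Module k M] [AddCommGroup N] [Module k N]

/-- The power series `Σ eM(ξᵢ r) tⁱ`, linear in `r`. -/
noncomputable def xiE (ξ : ℕ → (A →ₗ[k] Module.End k M)) :
    A →ₗ[k] PowerSeries (Module.End k (M × N)) where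
  toFun r := PowerSeries.mk fun i => eMblk (ξ i r)
  map_add' r s := PowerSeries.ext fun i => by
    simp only [PowerSeries.coeff_mk, map_add]
  map_smul' c r := PowerSeries.ext fun i => by
    simp only [PowerSeries.coeff_mk, PowerSeries.coeff_smul, map_smul, RingHom.id_apply]

/-- The power series `Σ eN(ηᵢ r) tⁱ`, linear in `r`. -/
noncomputable def etaE (η : ℕ → (A →ₗ[k] Module.End k N)) :
    A →ₗ[k] PowerSeries (Module.End k (M × N)) where
  toFun r := PowerSeries.mk fun i => eNblk (η i r)
  map_add' r s := PowerSeries.ext fun i => by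
    simp only [PowerSeries.coeff_mk, map_add]
  map_smul' c r := PowerSeries.ext fun i => by
    simp only [PowerSeries.coeff_mk, PowerSeries.coeff_smul, map_smul, RingHom.id_apply]

/-- The power series `Σ eH(Φᵢ) tⁱ`. -/
noncomputable def phiE (Φ : ℕ → (M →ₗ[k] N)) : PowerSeries (Module.End k (M × N)) :=
  PowerSeries.mk fun i => eHblk (Φ i)

/-- The `l`-th coefficient of `U * X * V`, as a linear function of `X`. -/
noncomputable def conjCoeffL {R : Type*} [Ring R] [Algebra k R]
    (U V : PowerSeries R) (l : ℕ) : PowerSeries R →ₗ[k] R where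
  toFun X := PowerSeries.coeff l (U * X * V)
  map_add' X Y := by rw [mul_add, add_mul, map_add]
  map_smul' c X := by
    rw [mul_smul_comm, smul_mul_assoc, PowerSeries.coeff_smul, RingHom.id_apply]

@[simp] lemma conjCoeffL_apply {R : Type*} [Ring R] [Algebra k R]
    (U V : PowerSeries R) (l : ℕ) (X : PowerSeries R) :
    conjCoeffL (k := k) U V l X = PowerSeries.coeff l (U * X * V) := rfl

@[simp] lemma xiE_coeff (ξ : ℕ → (A →ₗ[k] Module.End k M)) (r : A) (i : ℕ) :
    PowerSeries.coeff i (xiE (N := N) ξ r) = eMblk (ξ i r) := by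
  show PowerSeries.coeff i (PowerSeries.mk fun j => eMblk (ξ j r)) = _
  exact PowerSeries.coeff_mk _ _

@[simp] lemma etaE_coeff (η : ℕ → (A →ₗ[k] Module.End k N)) (r : A) (i : ℕ) :
    PowerSeries.coeff i (etaE (M := M) η r) = eNblk (η i r) := by
  show PowerSeries.coeff i (PowerSeries.mk fun j => eNblk (η j r)) = _
  exact PowerSeries.coeff_mk _ _

@[simp] lemma phiE_coeff (Φ : ℕ → (M →ₗ[k] N)) (i : ℕ) :
    PowerSeries.coeff i (phiE Φ) = eHblk (Φ i) := PowerSeries.coeff_mk _ _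


end Series

/-- If the `n`-infinitesimal `(ξₙ, ηₙ, φₙ)` of a formal deformation `(ξ_t, η_t, φ_t)` of
`φ` is a coboundary `d(ψ, θ, 0)`, i.e. `ξₙ = δψ`, `ηₙ = δθ`, `φₙ = φψ - θφ`, then with
`Ψ_t = Id_M + ψ tⁿ` and `Θ_t = Id_N + θ tⁿ`, the conjugated triple
`(Ψ_t ξ_t Ψ_t⁻¹, Θ_t η_t Θ_t⁻¹, Θ_t φ_t Ψ_t⁻¹)` is a formal deformation of `φ`,
equivalent to `(ξ_t, η_t, φ_t)` via `(Ψ_t, Θ_t)`, whose coefficients vanish in degrees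
`1 ≤ i ≤ n`. -/
theorem equivalent_deformation_of_coboundary_infinitesimal (ξ0 : A →ₐ[k] Module.End k M)
    (η0 : A →ₐ[k] Module.End k N) (φ : M →ₗ[k] N)
    (ξ : ℕ → (A →ₗ[k] Module.End k M)) (η : ℕ → (A →ₗ[k] Module.End k N))
    (Φ : ℕ → (M →ₗ[k] N)) (hdef : IsFormalDeformation ξ0 η0 φ ξ η Φ)
    (n : ℕ) (hn : 1 ≤ n)
    (hvanish : ∀ i, 1 ≤ i → i < n → ξ i = 0 ∧ η i = 0 ∧ Φ i = 0)
    (ψ : Module.End k M) (θ : Module.End k N)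
    (hξn : ∀ a : A, ξ n a = ξ0 a * ψ - ψ * ξ0 a)
    (hηn : ∀ a : A, η n a = η0 a * θ - θ * η0 a)
    (hΦn : Φ n = φ ∘ₗ (ψ : M →ₗ[k] M) - (θ : N →ₗ[k] N) ∘ₗ φ) :
    ∃ (ξ' : ℕ → (A →ₗ[k] Module.End k M)) (η' : ℕ → (A →ₗ[k] Module.End k N))
        (Φ' : ℕ → (M →ₗ[k] N)),
      IsFormalDeformation ξ0 η0 φ ξ' η' Φ' ∧
      IsFormalIso ξ η Φ ξ' η' Φ'
        (fun i => if i = 0 then 1 else if i = n then ψ else 0)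
        (fun i => if i = 0 then 1 else if i = n then θ else 0) ∧
      (∀ i, 1 ≤ i → i ≤ n → ξ' i = 0 ∧ η' i = 0 ∧ Φ' i = 0) := by
  classical
  obtain ⟨hξ0, hη0, hΦ0, hξmul, hηmul, hcomp⟩ := hdef
  have hn0 : 0 < n := hn
  -- the E-level power series
  set U : PowerSeries (Module.End k (M × N)) :=
    1 + PowerSeries.monomial n (eMblk ψ) with hU
  set VU : PowerSeries (Module.End k (M × N)) := geomV (eMblk (k := k) (N := N) ψ) n with hVU
  set W : PowerSeries (Module.End k (M × N)) :=
    1 + PowerSeries.monomial n (eNblk θ) with hW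
  set VW : PowerSeries (Module.End k (M × N)) := geomV (eNblk (k := k) (M := M) θ) n with hVW
  have hUVU : U * VU = 1 := one_add_monomial_mul_geomV _ hn0
  have hVUU : VU * U = 1 := geomV_mul_one_add_monomial _ hn0
  have hWVW : W * VW = 1 := one_add_monomial_mul_geomV _ hn0
  have hVWW : VW * W = 1 := geomV_mul_one_add_monomial _ hn0
  set Ξ := xiE (N := N) ξ with hΞdef
  set Hs := etaE (M := M) η with hHdef
  set Fs := phiE Φ with hFdef
  -- hypotheses at the power series level
  have hΞmul : ∀ r s : A, Ξ (r * s) = Ξ r * Ξ s := by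
    intro r s
    refine PowerSeries.ext fun l => ?_
    rw [PowerSeries.coeff_mul, hΞdef, xiE_coeff, hξmul, map_sum]
    exact Finset.sum_congr rfl fun ij _ => by rw [xiE_coeff, xiE_coeff, eMblk_mul]
  have hHmul : ∀ r s : A, Hs (r * s) = Hs r * Hs s := by
    intro r s
    refine PowerSeries.ext fun l => ?_
    rw [PowerSeries.coeff_mul, hHdef, etaE_coeff, hηmul, map_sum]
    exact Finset.sum_congr rfl fun ij _ => by rw [etaE_coeff, etaE_coeff, eNblk_mul]
  have hFΞ : ∀ r : A, Fs * Ξ r = Hs r * Fs := by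
    intro r
    refine PowerSeries.ext fun l => ?_
    rw [PowerSeries.coeff_mul, PowerSeries.coeff_mul]
    calc ∑ ij ∈ antidiagonal l, PowerSeries.coeff ij.1 Fs * PowerSeries.coeff ij.2 (Ξ r)
        = ∑ ij ∈ antidiagonal l, eHblk (Φ ij.1 ∘ₗ (ξ ij.2 r : M →ₗ[k] M)) :=
          Finset.sum_congr rfl fun ij _ => by
            rw [hFdef, phiE_coeff, xiE_coeff, eHblk_mul_eMblk]
      _ = eHblk (∑ ij ∈ antidiagonal l, Φ ij.1 ∘ₗ (ξ ij.2 r : M →ₗ[k] M)) := (map_sum _ _ _).symm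
      _ = eHblk (∑ ij ∈ antidiagonal l, (η ij.1 r : N →ₗ[k] N) ∘ₗ Φ ij.2) := by rw [hcomp]
      _ = ∑ ij ∈ antidiagonal l, PowerSeries.coeff ij.1 (Hs r) * PowerSeries.coeff ij.2 Fs := by
          rw [map_sum]
          exact Finset.sum_congr rfl fun ij _ => by
            rw [hHdef, etaE_coeff, hFdef, phiE_coeff, eNblk_mul_eHblk]
  -- the new deformation coefficients
  set ξ' : ℕ → (A →ₗ[k] Module.End k M) :=
    fun l => rMblk ∘ₗ conjCoeffL U VU l ∘ₗ Ξ with hξ'def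
  set η' : ℕ → (A →ₗ[k] Module.End k N) :=
    fun l => rNblk ∘ₗ conjCoeffL W VW l ∘ₗ Hs with hη'def
  set Φ' : ℕ → (M →ₗ[k] N) :=
    fun l => rHblk (PowerSeries.coeff l (W * Fs * VU)) with hΦ'def
  -- block facts
  have hBξ : ∀ (l : ℕ) (r : A), eMblk (ξ' l r) = PowerSeries.coeff l (U * Ξ r * VU) := by
    intro l r
    have hmem : PowerSeries.coeff l (U * Ξ r * VU) ∈
        LinearMap.range (eMblk (k := k) (M := M) (N := N)) := by
      rw [hU, hVU]
      refine coeff_conj_mem (LinearMap.range (eMblk (k := k) (M := M) (N := N))) hn0 ?_ ?_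
        (Ξ r) (fun i => ⟨ξ i r, (xiE_coeff ξ r i).symm⟩) l
      · rintro x ⟨y, rfl⟩; exact ⟨ψ * y, (eMblk_mul ψ y).symm⟩
      · rintro x ⟨y, rfl⟩; exact ⟨y * ψ, (eMblk_mul y ψ).symm⟩
    obtain ⟨x, hx⟩ := hmem
    show eMblk (rMblk (PowerSeries.coeff l (U * Ξ r * VU))) = _
    rw [← hx, rMblk_eMblk]
  have hBη : ∀ (l : ℕ) (r : A), eNblk (η' l r) = PowerSeries.coeff l (W * Hs r * VW) := by
    intro l r
    have hmem : PowerSeries.coeff l (W * Hs r * VW) ∈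
        LinearMap.range (eNblk (k := k) (M := M) (N := N)) := by
      rw [hW, hVW]
      refine coeff_conj_mem (LinearMap.range (eNblk (k := k) (M := M) (N := N))) hn0 ?_ ?_
        (Hs r) (fun i => ⟨η i r, (etaE_coeff η r i).symm⟩) l
      · rintro x ⟨y, rfl⟩; exact ⟨θ * y, (eNblk_mul θ y).symm⟩
      · rintro x ⟨y, rfl⟩; exact ⟨y * θ, (eNblk_mul y θ).symm⟩
    obtain ⟨x, hx⟩ := hmem
    show eNblk (rNblk (PowerSeries.coeff l (W * Hs r * VW))) = _
    rw [← hx, rNblk_eNblk]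
  have hBΦ : ∀ l : ℕ, eHblk (Φ' l) = PowerSeries.coeff l (W * Fs * VU) := by
    intro l
    have hmem : PowerSeries.coeff l (W * Fs * VU) ∈
        LinearMap.range (eHblk (k := k) (M := M) (N := N)) := by
      rw [hW, hVU]
      refine coeff_conj_mem (LinearMap.range (eHblk (k := k) (M := M) (N := N))) hn0 ?_ ?_
        Fs (fun i => ⟨Φ i, (phiE_coeff Φ i).symm⟩) l
      · rintro x ⟨y, rfl⟩; exact ⟨(θ : N →ₗ[k] N) ∘ₗ y, (eNblk_mul_eHblk θ y).symm⟩
      · rintro x ⟨y, rfl⟩; exact ⟨y ∘ₗ (ψ : M →ₗ[k] M), (eHblk_mul_eMblk y ψ).symm⟩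
    obtain ⟨x, hx⟩ := hmem
    show eHblk (rHblk (PowerSeries.coeff l (W * Fs * VU))) = _
    rw [← hx, rHblk_eHblk]
  refine ⟨ξ', η', Φ', ⟨?_, ?_, ?_, ?_, ?_, ?_⟩, ⟨?_, ?_, ?_, ?_, ?_⟩, ?_⟩
  · -- ξ' 0 = ξ0
    refine LinearMap.ext fun r => ?_
    refine eMblk_inj (N := N) ?_
    rw [hBξ, hU, hVU, coeff_conj_of_le hn0 _ (Nat.zero_le n), if_neg (by omega : ¬(0:ℕ) = n),
      add_zero, hΞdef, xiE_coeff, hξ0]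
  · -- η' 0 = η0
    refine LinearMap.ext fun r => ?_
    refine eNblk_inj (M := M) ?_
    rw [hBη, hW, hVW, coeff_conj_of_le hn0 _ (Nat.zero_le n), if_neg (by omega : ¬(0:ℕ) = n),
      add_zero, hHdef, etaE_coeff, hη0]
  · -- Φ' 0 = φ
    refine eHblk_inj (k := k) ?_
    rw [hBΦ, hW, hVU, coeff_conj_of_le hn0 _ (Nat.zero_le n), if_neg (by omega : ¬(0:ℕ) = n),
      add_zero, hFdef, phiE_coeff, hΦ0]
  · -- multiplicativity of ξ'
    intro l r s
    refine eMblk_inj (N := N) ?_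
    rw [map_sum]
    calc eMblk (ξ' l (r * s)) = PowerSeries.coeff l (U * Ξ (r * s) * VU) := hBξ l (r * s)
      _ = PowerSeries.coeff l ((U * Ξ r * VU) * (U * Ξ s * VU)) := by
          rw [hΞmul, conj_mul_conj hVUU]
      _ = ∑ ij ∈ antidiagonal l,
            PowerSeries.coeff ij.1 (U * Ξ r * VU) * PowerSeries.coeff ij.2 (U * Ξ s * VU) :=
          PowerSeries.coeff_mul _ _ _
      _ = ∑ ij ∈ antidiagonal l, eMblk (ξ' ij.1 r * ξ' ij.2 s) :=
          Finset.sum_congr rfl fun ij _ => by rw [← hBξ, ← hBξ, eMblk_mul]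
  · -- multiplicativity of η'
    intro l r s
    refine eNblk_inj (M := M) ?_
    rw [map_sum]
    calc eNblk (η' l (r * s)) = PowerSeries.coeff l (W * Hs (r * s) * VW) := hBη l (r * s)
      _ = PowerSeries.coeff l ((W * Hs r * VW) * (W * Hs s * VW)) := by
          rw [hHmul, conj_mul_conj hVWW]
      _ = ∑ ij ∈ antidiagonal l,
            PowerSeries.coeff ij.1 (W * Hs r * VW) * PowerSeries.coeff ij.2 (W * Hs s * VW) :=
          PowerSeries.coeff_mul _ _ _
      _ = ∑ ij ∈ antidiagonal l, eNblk (η' ij.1 r * η' ij.2 s) :=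
          Finset.sum_congr rfl fun ij _ => by rw [← hBη, ← hBη, eNblk_mul]
  · -- compatibility of Φ' with ξ' and η'
    intro l r
    refine eHblk_inj (k := k) ?_
    rw [map_sum, map_sum]
    calc ∑ ij ∈ antidiagonal l, eHblk (Φ' ij.1 ∘ₗ (ξ' ij.2 r : M →ₗ[k] M))
        = ∑ ij ∈ antidiagonal l,
            PowerSeries.coeff ij.1 (W * Fs * VU) * PowerSeries.coeff ij.2 (U * Ξ r * VU) :=
          Finset.sum_congr rfl fun ij _ => by rw [← hBΦ, ← hBξ, eHblk_mul_eMblk]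
      _ = PowerSeries.coeff l ((W * Fs * VU) * (U * Ξ r * VU)) :=
          (PowerSeries.coeff_mul _ _ _).symm
      _ = PowerSeries.coeff l ((W * Hs r * VW) * (W * Fs * VU)) := by
          rw [conj_mul_conj hVUU, hFΞ, ← conj_mul_conj hVWW]
      _ = ∑ ij ∈ antidiagonal l,
            PowerSeries.coeff ij.1 (W * Hs r * VW) * PowerSeries.coeff ij.2 (W * Fs * VU) :=
          PowerSeries.coeff_mul _ _ _
      _ = ∑ ij ∈ antidiagonal l, eHblk ((η' ij.1 r : N →ₗ[k] N) ∘ₗ Φ' ij.2) :=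
          Finset.sum_congr rfl fun ij _ => by rw [← hBη, ← hBΦ, eNblk_mul_eHblk]
  · simp
  · simp
  · -- ξ'-part of the formal isomorphism
    intro l r
    refine eMblk_inj (N := N) ?_
    rw [map_sum, map_sum]
    have hcU : ∀ i : ℕ, PowerSeries.coeff i U
        = if i = 0 then 1 else if i = n then eMblk ψ else 0 := by
      intro i; rw [hU]; exact coeff_one_add_monomial hn0 i
    have key1 : ∀ ij : ℕ × ℕ, eMblk (ξ' ij.1 r * if ij.2 = 0 then 1 else if ij.2 = n then ψ else 0)
        = PowerSeries.coeff ij.1 (U * Ξ r * VU) * PowerSeries.coeff ij.2 U := by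
      rintro ⟨i, j⟩
      rw [← hBξ, hcU]
      dsimp only
      rcases eq_or_ne j 0 with rfl | h0
      · rw [if_pos rfl, if_pos rfl, mul_one, mul_one]
      · rw [if_neg h0, if_neg h0]
        rcases eq_or_ne j n with rfl | hn'
        · rw [if_pos rfl, if_pos rfl, eMblk_mul]
        · rw [if_neg hn', if_neg hn', mul_zero, map_zero, mul_zero]
    have key2 : ∀ ij : ℕ × ℕ, eMblk ((if ij.1 = 0 then 1 else if ij.1 = n then ψ else 0) * ξ ij.2 r)
        = PowerSeries.coeff ij.1 U * PowerSeries.coeff ij.2 (Ξ r) := by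
      rintro ⟨i, j⟩
      rw [xiE_coeff, hcU]
      dsimp only
      rcases eq_or_ne i 0 with rfl | h0
      · rw [if_pos rfl, if_pos rfl, one_mul, one_mul]
      · rw [if_neg h0, if_neg h0]
        rcases eq_or_ne i n with rfl | hn'
        · rw [if_pos rfl, if_pos rfl, eMblk_mul]
        · rw [if_neg hn', if_neg hn', zero_mul, map_zero, zero_mul]
    calc ∑ ij ∈ antidiagonal l,
          eMblk (ξ' ij.1 r * if ij.2 = 0 then 1 else if ij.2 = n then ψ else 0)
        = ∑ ij ∈ antidiagonal l,
            PowerSeries.coeff ij.1 (U * Ξ r * VU) * PowerSeries.coeff ij.2 U :=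
          Finset.sum_congr rfl fun ij _ => key1 ij
      _ = PowerSeries.coeff l ((U * Ξ r * VU) * U) := (PowerSeries.coeff_mul _ _ _).symm
      _ = PowerSeries.coeff l (U * Ξ r) := by rw [mul_assoc (U * Ξ r), hVUU, mul_one]
      _ = ∑ ij ∈ antidiagonal l, PowerSeries.coeff ij.1 U * PowerSeries.coeff ij.2 (Ξ r) :=
          PowerSeries.coeff_mul _ _ _
      _ = ∑ ij ∈ antidiagonal l,
            eMblk ((if ij.1 = 0 then 1 else if ij.1 = n then ψ else 0) * ξ ij.2 r) :=
          Finset.sum_congr rfl fun ij _ => (key2 ij).symm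
  · -- η'-part of the formal isomorphism
    intro l r
    refine eNblk_inj (M := M) ?_
    rw [map_sum, map_sum]
    have hcW : ∀ i : ℕ, PowerSeries.coeff i W
        = if i = 0 then 1 else if i = n then eNblk θ else 0 := by
      intro i; rw [hW]; exact coeff_one_add_monomial hn0 i
    have key1 : ∀ ij : ℕ × ℕ, eNblk (η' ij.1 r * if ij.2 = 0 then 1 else if ij.2 = n then θ else 0)
        = PowerSeries.coeff ij.1 (W * Hs r * VW) * PowerSeries.coeff ij.2 W := by
      rintro ⟨i, j⟩
      rw [← hBη, hcW]
      dsimp only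
      rcases eq_or_ne j 0 with rfl | h0
      · rw [if_pos rfl, if_pos rfl, mul_one, mul_one]
      · rw [if_neg h0, if_neg h0]
        rcases eq_or_ne j n with rfl | hn'
        · rw [if_pos rfl, if_pos rfl, eNblk_mul]
        · rw [if_neg hn', if_neg hn', mul_zero, map_zero, mul_zero]
    have key2 : ∀ ij : ℕ × ℕ, eNblk ((if ij.1 = 0 then 1 else if ij.1 = n then θ else 0) * η ij.2 r)
        = PowerSeries.coeff ij.1 W * PowerSeries.coeff ij.2 (Hs r) := by
      rintro ⟨i, j⟩
      rw [etaE_coeff, hcW]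
      dsimp only
      rcases eq_or_ne i 0 with rfl | h0
      · rw [if_pos rfl, if_pos rfl, one_mul, one_mul]
      · rw [if_neg h0, if_neg h0]
        rcases eq_or_ne i n with rfl | hn'
        · rw [if_pos rfl, if_pos rfl, eNblk_mul]
        · rw [if_neg hn', if_neg hn', zero_mul, map_zero, zero_mul]
    calc ∑ ij ∈ antidiagonal l,
          eNblk (η' ij.1 r * if ij.2 = 0 then 1 else if ij.2 = n then θ else 0)
        = ∑ ij ∈ antidiagonal l,
            PowerSeries.coeff ij.1 (W * Hs r * VW) * PowerSeries.coeff ij.2 W :=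
          Finset.sum_congr rfl fun ij _ => key1 ij
      _ = PowerSeries.coeff l ((W * Hs r * VW) * W) := (PowerSeries.coeff_mul _ _ _).symm
      _ = PowerSeries.coeff l (W * Hs r) := by rw [mul_assoc (W * Hs r), hVWW, mul_one]
      _ = ∑ ij ∈ antidiagonal l, PowerSeries.coeff ij.1 W * PowerSeries.coeff ij.2 (Hs r) :=
          PowerSeries.coeff_mul _ _ _
      _ = ∑ ij ∈ antidiagonal l,
            eNblk ((if ij.1 = 0 then 1 else if ij.1 = n then θ else 0) * η ij.2 r) :=
          Finset.sum_congr rfl fun ij _ => (key2 ij).symm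
  · -- Φ'-part of the formal isomorphism
    intro l
    refine eHblk_inj (k := k) ?_
    rw [map_sum, map_sum]
    have hcU : ∀ i : ℕ, PowerSeries.coeff i U
        = if i = 0 then 1 else if i = n then eMblk ψ else 0 := by
      intro i; rw [hU]; exact coeff_one_add_monomial hn0 i
    have hcW : ∀ i : ℕ, PowerSeries.coeff i W
        = if i = 0 then 1 else if i = n then eNblk θ else 0 := by
      intro i; rw [hW]; exact coeff_one_add_monomial hn0 i
    have key1 : ∀ ij : ℕ × ℕ,
        eHblk (Φ' ij.1 ∘ₗ ((if ij.2 = 0 then 1 else if ij.2 = n then ψ else 0 : Module.End k M) : M →ₗ[k] M))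
        = PowerSeries.coeff ij.1 (W * Fs * VU) * PowerSeries.coeff ij.2 U := by
      rintro ⟨i, j⟩
      rw [← hBΦ, hcU]
      dsimp only
      rcases eq_or_ne j 0 with rfl | h0
      · rw [if_pos rfl, if_pos rfl, mul_one]
        exact congrArg eHblk (LinearMap.ext fun x => rfl)
      · rw [if_neg h0, if_neg h0]
        rcases eq_or_ne j n with rfl | hn'
        · rw [if_pos rfl, if_pos rfl, eHblk_mul_eMblk]
        · rw [if_neg hn', if_neg hn', mul_zero]
          have : (Φ' i) ∘ₗ ((0 : Module.End k M) : M →ₗ[k] M) = 0 := LinearMap.comp_zero _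
          rw [this, map_zero]
    have key2 : ∀ ij : ℕ × ℕ,
        eHblk (((if ij.1 = 0 then 1 else if ij.1 = n then θ else 0 : Module.End k N) : N →ₗ[k] N) ∘ₗ Φ ij.2)
        = PowerSeries.coeff ij.1 W * PowerSeries.coeff ij.2 Fs := by
      rintro ⟨i, j⟩
      rw [hFdef, phiE_coeff, hcW]
      dsimp only
      rcases eq_or_ne i 0 with rfl | h0
      · rw [if_pos rfl, if_pos rfl, one_mul]
        exact congrArg eHblk (LinearMap.ext fun x => rfl)
      · rw [if_neg h0, if_neg h0]
        rcases eq_or_ne i n with rfl | hn'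
        · rw [if_pos rfl, if_pos rfl, eNblk_mul_eHblk]
        · rw [if_neg hn', if_neg hn', zero_mul]
          have : ((0 : Module.End k N) : N →ₗ[k] N) ∘ₗ Φ j = 0 := LinearMap.zero_comp _
          rw [this, map_zero]
    calc ∑ ij ∈ antidiagonal l,
          eHblk (Φ' ij.1 ∘ₗ ((if ij.2 = 0 then 1 else if ij.2 = n then ψ else 0 : Module.End k M) : M →ₗ[k] M))
        = ∑ ij ∈ antidiagonal l,
            PowerSeries.coeff ij.1 (W * Fs * VU) * PowerSeries.coeff ij.2 U :=
          Finset.sum_congr rfl fun ij _ => key1 ij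
      _ = PowerSeries.coeff l ((W * Fs * VU) * U) := (PowerSeries.coeff_mul _ _ _).symm
      _ = PowerSeries.coeff l (W * Fs) := by rw [mul_assoc (W * Fs), hVUU, mul_one]
      _ = ∑ ij ∈ antidiagonal l, PowerSeries.coeff ij.1 W * PowerSeries.coeff ij.2 Fs :=
          PowerSeries.coeff_mul _ _ _
      _ = ∑ ij ∈ antidiagonal l,
            eHblk (((if ij.1 = 0 then 1 else if ij.1 = n then θ else 0 : Module.End k N) : N →ₗ[k] N) ∘ₗ Φ ij.2) :=
          Finset.sum_congr rfl fun ij _ => (key2 ij).symm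
  · -- vanishing in degrees 1 ≤ i ≤ n
    intro i h1 h2
    refine ⟨?_, ?_, ?_⟩
    · refine LinearMap.ext fun r => ?_
      rw [LinearMap.zero_apply]
      refine eMblk_inj (N := N) ?_
      rw [map_zero, hBξ, hU, hVU, coeff_conj_of_le hn0 _ h2, hΞdef]
      simp only [xiE_coeff]
      rcases eq_or_ne i n with rfl | hne
      · rw [if_pos rfl, hξn, hξ0]
        simp only [AlgHom.toLinearMap_apply]
        rw [eMblk_mul, eMblk_mul]
        simp only [map_sub]
        abel
      · rw [if_neg hne, add_zero, (hvanish i h1 (lt_of_le_of_ne h2 hne)).1]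
        simp
    · refine LinearMap.ext fun r => ?_
      rw [LinearMap.zero_apply]
      refine eNblk_inj (M := M) ?_
      rw [map_zero, hBη, hW, hVW, coeff_conj_of_le hn0 _ h2, hHdef]
      simp only [etaE_coeff]
      rcases eq_or_ne i n with rfl | hne
      · rw [if_pos rfl, hηn, hη0]
        simp only [AlgHom.toLinearMap_apply]
        rw [eNblk_mul, eNblk_mul]
        simp only [map_sub]
        abel
      · rw [if_neg hne, add_zero, (hvanish i h1 (lt_of_le_of_ne h2 hne)).2.1]
        simp
    · refine eHblk_inj (k := k) ?_
      rw [map_zero, hBΦ, hW, hVU, coeff_conj_of_le hn0 _ h2, hFdef]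
      simp only [phiE_coeff]
      rcases eq_or_ne i n with rfl | hne
      · rw [if_pos rfl, hΦn, hΦ0]
        rw [eNblk_mul_eHblk, eHblk_mul_eMblk]
        simp only [map_sub]
        abel
      · rw [if_neg hne, add_zero, (hvanish i h1 (lt_of_le_of_ne h2 hne)).2.2]
        simp
end

section
/- Let (ξ_t, η_t, φ_t) be a deformation of order n of φ and suppose Ob_{n+1}(φ_t) = d^1(ξ_{n+1}, η_{n+1}, φ_{n+1}) for some (ξ_{n+1}, η_{n+1}, φ_{n+1}) ∈ C^1(φ). Then (ξ_t + ξ_{n+1}t^{n+1}, η_t + η_{n+1}t^{n+1}, φ_t + φ_{n+1}t^{n+1}) is a deformation of φ of order n+1 extending (ξ_t, η_t, φ_t). -/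
open Finset

variable {k A M N : Type*} [CommRing k] [Ring A] [Algebra k A]
  [AddCommGroup M] [Module k M] [AddCommGroup N] [Module k N]

/-- The differential `d¹(u,v,w) = (δu, δv, φu - vφ - δw)` of the deformation complex,
applied to a 1-cochain `(u,v,w) ∈ C¹(φ)`, written out as a triple of functions. -/
def dOne (ξ0 : A →ₐ[k] Module.End k M) (η0 : A →ₐ[k] Module.End k N) (φ : M →ₗ[k] N)
    (u : A →ₗ[k] Module.End k M) (v : A →ₗ[k] Module.End k N) (w : M →ₗ[k] N) :
    (A → A → Module.End k M) × (A → A → Module.End k N) × (A → (M →ₗ[k] N)) :=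
  ⟨fun a b => ξ0 a * u b - u (a * b) + u a * ξ0 b,
   fun a b => η0 a * v b - v (a * b) + v a * η0 b,
   fun a => φ ∘ₗ (u a : M →ₗ[k] M) - (v a : N →ₗ[k] N) ∘ₗ φ -
     ((η0 a : N →ₗ[k] N) ∘ₗ w - w ∘ₗ (ξ0 a : M →ₗ[k] M))⟩

/-- The `(n+1)`-th obstruction cochain `Ob_{n+1} = (O₁, O₂, O₃) ∈ C²(φ)` of a deformation
of order `n`: `O₁(a,b) = -Σ_{i+j=n+1, i,j>0} ξᵢ(a)ξⱼ(b)`,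
`O₂(a,b) = -Σ_{i+j=n+1, i,j>0} ηᵢ(a)ηⱼ(b)`,
`O₃(a) = Σ_{i+j=n+1, i,j>0} (ηᵢ(a)∘φⱼ - φᵢ∘ξⱼ(a))`. -/
def obstruction (ξ : ℕ → (A →ₗ[k] Module.End k M)) (η : ℕ → (A →ₗ[k] Module.End k N))
    (Φ : ℕ → (M →ₗ[k] N)) (n : ℕ) :
    (A → A → Module.End k M) × (A → A → Module.End k N) × (A → (M →ₗ[k] N)) :=
  ⟨fun a b => -∑ ij ∈ (antidiagonal (n + 1)).filter (fun ij => ij.1 ≠ 0 ∧ ij.2 ≠ 0),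
      ξ ij.1 a * ξ ij.2 b,
   fun a b => -∑ ij ∈ (antidiagonal (n + 1)).filter (fun ij => ij.1 ≠ 0 ∧ ij.2 ≠ 0),
      η ij.1 a * η ij.2 b,
   fun a => ∑ ij ∈ (antidiagonal (n + 1)).filter (fun ij => ij.1 ≠ 0 ∧ ij.2 ≠ 0),
      ((η ij.1 a : N →ₗ[k] N) ∘ₗ Φ ij.2 - Φ ij.1 ∘ₗ (ξ ij.2 a : M →ₗ[k] M))⟩

lemma split_antidiagonal_sum {G : Type*} [AddCommMonoid G] (n : ℕ) (f : ℕ × ℕ → G) :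
    ∑ ij ∈ antidiagonal (n + 1), f ij =
      f (0, n + 1) + f (n + 1, 0) +
        ∑ ij ∈ (antidiagonal (n + 1)).filter (fun ij => ij.1 ≠ 0 ∧ ij.2 ≠ 0), f ij := by
  classical
  rw [← Finset.sum_filter_add_sum_filter_not (antidiagonal (n + 1))
    (fun ij => ij.1 ≠ 0 ∧ ij.2 ≠ 0) f]
  have hset : (antidiagonal (n + 1)).filter (fun ij => ¬(ij.1 ≠ 0 ∧ ij.2 ≠ 0)) =
      {((0 : ℕ), n + 1), (n + 1, 0)} := by
    ext ⟨i, j⟩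
    simp only [Finset.mem_filter, Finset.HasAntidiagonal.mem_antidiagonal, Finset.mem_insert,
      Finset.mem_singleton, Prod.mk.injEq, not_and_or, not_not]
    omega
  rw [hset, Finset.sum_insert (by simp), Finset.sum_singleton]
  abel

lemma cancel_aux {G : Type*} [AddCommGroup G] {a b c d : G} (h : a = b)
    (h2 : c - d = b - a) : c = d := by
  rw [← sub_eq_zero, h2, h, sub_self]

/-- If `(ξ_t, η_t, φ_t)` is a deformation of order `n` of `φ` and the obstruction
`Ob_{n+1}(φ_t)` equals `d¹(ξ_{n+1}, η_{n+1}, φ_{n+1})`, then adjoining the terms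
`ξ_{n+1}t^{n+1}`, `η_{n+1}t^{n+1}`, `φ_{n+1}t^{n+1}` yields a deformation of order `n+1`
extending `(ξ_t, η_t, φ_t)`. -/
theorem extend_of_obstruction_eq_coboundary (ξ0 : A →ₐ[k] Module.End k M)
    (η0 : A →ₐ[k] Module.End k N) (φ : M →ₗ[k] N)
    (ξ : ℕ → (A →ₗ[k] Module.End k M)) (η : ℕ → (A →ₗ[k] Module.End k N))
    (Φ : ℕ → (M →ₗ[k] N)) (n : ℕ) (h : IsDeformationOfOrder ξ0 η0 φ ξ η Φ n)
    (u : A →ₗ[k] Module.End k M) (v : A →ₗ[k] Module.End k N) (w : M →ₗ[k] N)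
    (hob : dOne ξ0 η0 φ u v w = obstruction ξ η Φ n) :
    IsDeformationOfOrder ξ0 η0 φ
      (Function.update ξ (n + 1) u) (Function.update η (n + 1) v)
      (Function.update Φ (n + 1) w) (n + 1) := by
  classical
  obtain ⟨hξ0, hη0, hΦ0, hξ, hη, hΦφ⟩ := h
  have hob1 : ∀ a b : A, ξ0 a * u b - u (a * b) + u a * ξ0 b =
      -∑ ij ∈ (antidiagonal (n + 1)).filter (fun ij => ij.1 ≠ 0 ∧ ij.2 ≠ 0),
        ξ ij.1 a * ξ ij.2 b :=
    fun a b => congrFun (congrFun (congrArg Prod.fst hob) a) b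
  have hob2 : ∀ a b : A, η0 a * v b - v (a * b) + v a * η0 b =
      -∑ ij ∈ (antidiagonal (n + 1)).filter (fun ij => ij.1 ≠ 0 ∧ ij.2 ≠ 0),
        η ij.1 a * η ij.2 b :=
    fun a b => congrFun (congrFun (congrArg (fun p => p.2.1) hob) a) b
  have hob3 : ∀ a : A, φ ∘ₗ (u a : M →ₗ[k] M) - (v a : N →ₗ[k] N) ∘ₗ φ -
      ((η0 a : N →ₗ[k] N) ∘ₗ w - w ∘ₗ (ξ0 a : M →ₗ[k] M)) =
      ∑ ij ∈ (antidiagonal (n + 1)).filter (fun ij => ij.1 ≠ 0 ∧ ij.2 ≠ 0),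
        ((η ij.1 a : N →ₗ[k] N) ∘ₗ Φ ij.2 - Φ ij.1 ∘ₗ (ξ ij.2 a : M →ₗ[k] M)) :=
    fun a => congrFun (congrArg (fun p => p.2.2) hob) a
  have upξ : ∀ i ≤ n, Function.update ξ (n + 1) u i = ξ i :=
    fun i hi => Function.update_of_ne (by omega) _ _
  have upη : ∀ i ≤ n, Function.update η (n + 1) v i = η i :=
    fun i hi => Function.update_of_ne (by omega) _ _
  have upΦ : ∀ i ≤ n, Function.update Φ (n + 1) w i = Φ i :=
    fun i hi => Function.update_of_ne (by omega) _ _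
  refine ⟨by rw [upξ 0 (Nat.zero_le n)]; exact hξ0,
          by rw [upη 0 (Nat.zero_le n)]; exact hη0,
          by rw [upΦ 0 (Nat.zero_le n)]; exact hΦ0, ?_, ?_, ?_⟩
  · intro l hl r s
    rcases Nat.lt_or_ge l (n + 1) with h' | h'
    · have hl' : l ≤ n := by omega
      rw [upξ l hl', hξ l hl']
      refine Finset.sum_congr rfl fun ij hij => ?_
      rw [Finset.HasAntidiagonal.mem_antidiagonal] at hij
      rw [upξ ij.1 (by omega), upξ ij.2 (by omega)]
    · have hl' : l = n + 1 := by omega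
      subst hl'
      rw [Function.update_self, split_antidiagonal_sum]
      simp only [Function.update_self, upξ 0 (Nat.zero_le n), hξ0,
        AlgHom.toLinearMap_apply]
      have hmid : ∑ ij ∈ (antidiagonal (n + 1)).filter (fun ij => ij.1 ≠ 0 ∧ ij.2 ≠ 0),
          Function.update ξ (n + 1) u ij.1 r * Function.update ξ (n + 1) u ij.2 s =
          ∑ ij ∈ (antidiagonal (n + 1)).filter (fun ij => ij.1 ≠ 0 ∧ ij.2 ≠ 0),
          ξ ij.1 r * ξ ij.2 s := by
        refine Finset.sum_congr rfl fun ij hij => ?_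
        rw [Finset.mem_filter, Finset.HasAntidiagonal.mem_antidiagonal] at hij
        rw [upξ ij.1 (by omega), upξ ij.2 (by omega)]
      rw [hmid]
      exact cancel_aux (hob1 r s) (by abel)
  · intro l hl r s
    rcases Nat.lt_or_ge l (n + 1) with h' | h'
    · have hl' : l ≤ n := by omega
      rw [upη l hl', hη l hl']
      refine Finset.sum_congr rfl fun ij hij => ?_
      rw [Finset.HasAntidiagonal.mem_antidiagonal] at hij
      rw [upη ij.1 (by omega), upη ij.2 (by omega)]
    · have hl' : l = n + 1 := by omega
      subst hl'
      rw [Function.update_self, split_antidiagonal_sum]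
      simp only [Function.update_self, upη 0 (Nat.zero_le n), hη0,
        AlgHom.toLinearMap_apply]
      have hmid : ∑ ij ∈ (antidiagonal (n + 1)).filter (fun ij => ij.1 ≠ 0 ∧ ij.2 ≠ 0),
          Function.update η (n + 1) v ij.1 r * Function.update η (n + 1) v ij.2 s =
          ∑ ij ∈ (antidiagonal (n + 1)).filter (fun ij => ij.1 ≠ 0 ∧ ij.2 ≠ 0),
          η ij.1 r * η ij.2 s := by
        refine Finset.sum_congr rfl fun ij hij => ?_
        rw [Finset.mem_filter, Finset.HasAntidiagonal.mem_antidiagonal] at hij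
        rw [upη ij.1 (by omega), upη ij.2 (by omega)]
      rw [hmid]
      exact cancel_aux (hob2 r s) (by abel)
  · intro l hl r
    rcases Nat.lt_or_ge l (n + 1) with h' | h'
    · have hl' : l ≤ n := by omega
      have e1 : ∑ ij ∈ antidiagonal l,
          Function.update Φ (n + 1) w ij.1 ∘ₗ
            (Function.update ξ (n + 1) u ij.2 r : M →ₗ[k] M) =
          ∑ ij ∈ antidiagonal l, Φ ij.1 ∘ₗ (ξ ij.2 r : M →ₗ[k] M) := by
        refine Finset.sum_congr rfl fun ij hij => ?_
        rw [Finset.HasAntidiagonal.mem_antidiagonal] at hij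
        rw [upΦ ij.1 (by omega), upξ ij.2 (by omega)]
      have e2 : ∑ ij ∈ antidiagonal l,
          (Function.update η (n + 1) v ij.1 r : N →ₗ[k] N) ∘ₗ
            Function.update Φ (n + 1) w ij.2 =
          ∑ ij ∈ antidiagonal l, (η ij.1 r : N →ₗ[k] N) ∘ₗ Φ ij.2 := by
        refine Finset.sum_congr rfl fun ij hij => ?_
        rw [Finset.HasAntidiagonal.mem_antidiagonal] at hij
        rw [upη ij.1 (by omega), upΦ ij.2 (by omega)]
      rw [e1, e2]
      exact hΦφ l hl' r
    · have hl' : l = n + 1 := by omega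
      subst hl'
      rw [split_antidiagonal_sum, split_antidiagonal_sum]
      simp only [Function.update_self, upξ 0 (Nat.zero_le n), upη 0 (Nat.zero_le n),
        upΦ 0 (Nat.zero_le n), hξ0, hη0, hΦ0, AlgHom.toLinearMap_apply]
      have e1 : ∑ ij ∈ (antidiagonal (n + 1)).filter (fun ij => ij.1 ≠ 0 ∧ ij.2 ≠ 0),
          Function.update Φ (n + 1) w ij.1 ∘ₗ
            (Function.update ξ (n + 1) u ij.2 r : M →ₗ[k] M) =
          ∑ ij ∈ (antidiagonal (n + 1)).filter (fun ij => ij.1 ≠ 0 ∧ ij.2 ≠ 0),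
            Φ ij.1 ∘ₗ (ξ ij.2 r : M →ₗ[k] M) := by
        refine Finset.sum_congr rfl fun ij hij => ?_
        rw [Finset.mem_filter, Finset.HasAntidiagonal.mem_antidiagonal] at hij
        rw [upΦ ij.1 (by omega), upξ ij.2 (by omega)]
      have e2 : ∑ ij ∈ (antidiagonal (n + 1)).filter (fun ij => ij.1 ≠ 0 ∧ ij.2 ≠ 0),
          (Function.update η (n + 1) v ij.1 r : N →ₗ[k] N) ∘ₗ
            Function.update Φ (n + 1) w ij.2 =
          ∑ ij ∈ (antidiagonal (n + 1)).filter (fun ij => ij.1 ≠ 0 ∧ ij.2 ≠ 0),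
            (η ij.1 r : N →ₗ[k] N) ∘ₗ Φ ij.2 := by
        refine Finset.sum_congr rfl fun ij hij => ?_
        rw [Finset.mem_filter, Finset.HasAntidiagonal.mem_antidiagonal] at hij
        rw [upη ij.1 (by omega), upΦ ij.2 (by omega)]
      rw [e1, e2]
      have h3 := hob3 r
      rw [Finset.sum_sub_distrib] at h3
      exact cancel_aux h3.symm (by abel)
end
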